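/- Let G be a finite group with a unitary representation U on ℂ^d and twirling operation 𝒢. Suppose that for all density matrices ρ and σ on ℂ^d one has 𝒢(ρ) · 𝒢(σ) = 𝒢(σ) · 𝒢(ρ). Then the commutant of the representation is commutative: for any two d×d matrices X and Y satisfying U_g X = X U_g and U_g Y = Y U_g for all g ∈ G, one has X Y = Y X. -/

import Mathlib

open scoped BigOperators Kronecker ComplexOrder
open Matrix

/-- von Neumann entropy of a matrix (via eigenvalues when Hermitian, else 0). -/
noncomputable def vnEntropy {ι : Type*} [Fintype ι] [DecidableEq ι]
    (ρ : Matrix ι ι ℂ) : ℝ :=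
  if h : ρ.IsHermitian then -∑ i, h.eigenvalues i * Real.log (h.eigenvalues i) else 0

/-- Twirling operation induced by a family of matrices indexed by a finite group. -/
noncomputable def twirl {G ι : Type*} [Fintype G] [Fintype ι]
    (U : G → Matrix ι ι ℂ) (X : Matrix ι ι ℂ) : Matrix ι ι ℂ :=
  (Fintype.card G : ℂ)⁻¹ • ∑ g, U g * X * (U g)ᴴ

/-- Apply a real function spectrally to a Hermitian matrix (0 otherwise). -/
noncomputable def matFun {ι : Type*} [Fintype ι] [DecidableEq ι]
    (f : ℝ → ℝ) (ρ : Matrix ι ι ℂ) : Matrix ι ι ℂ :=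
  if h : ρ.IsHermitian then
    (h.eigenvectorUnitary : Matrix ι ι ℂ) *
      Matrix.diagonal (fun i => (f (h.eigenvalues i) : ℂ)) *
      (star (h.eigenvectorUnitary : Matrix ι ι ℂ))
  else 0

/-- Spectral power `ρ ^ t` with the convention `0 ^ t = 0`. -/
noncomputable def matPow {ι : Type*} [Fintype ι] [DecidableEq ι]
    (ρ : Matrix ι ι ℂ) (t : ℝ) : Matrix ι ι ℂ :=
  matFun (fun x => if x = 0 then 0 else x ^ t) ρ

/-- Spectral logarithm with the convention `log 0 = 0`. -/
noncomputable def matLog {ι : Type*} [Fintype ι] [DecidableEq ι]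
    (ρ : Matrix ι ι ℂ) : Matrix ι ι ℂ :=
  matFun Real.log ρ

/-- Absolute value `|M| = √(MᴴM)`. -/
noncomputable def matAbs {ι : Type*} [Fintype ι] [DecidableEq ι]
    (M : Matrix ι ι ℂ) : Matrix ι ι ℂ :=
  matPow (Mᴴ * M) (1/2 : ℝ)


section AuxProof

open Matrix

variable {d : ℕ}

private lemma psd_real_smul {n : Type*} [Fintype n] {A : Matrix n n ℂ}
    (hA : A.PosSemidef) {c : ℝ} (hc : 0 ≤ c) : (((c : ℂ)) • A).PosSemidef := by
  constructor
  · have := hA.1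
    unfold Matrix.IsHermitian at *
    rw [conjTranspose_smul, this]
    simp [Complex.conj_ofReal]
  · intro x
    exact (hA.smul (by exact_mod_cast hc : (0:ℂ) ≤ (c:ℂ))).2 x

private lemma outer_psd (v : Fin d → ℂ) :
    (vecMulVec v (star v)).PosSemidef := by
  have h : vecMulVec v (star v) = replicateCol Unit v * (replicateCol Unit v)ᴴ := by
    ext k l
    simp [vecMulVec_apply, mul_apply, replicateCol]
  rw [h]
  exact posSemidef_self_mul_conjTranspose _

private lemma trace_outer (v : Fin d → ℂ) :
    (vecMulVec v (star v)).trace = ∑ k, v k * (starRingEnd ℂ) (v k) := by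
  simp [Matrix.trace, Matrix.diag, vecMulVec_apply]

/-- The set of density matrices. -/
private def densSet (d : ℕ) : Set (Matrix (Fin d) (Fin d) ℂ) :=
  {ρ | ρ.PosSemidef ∧ ρ.trace = 1}

private def vv (i j : Fin d) (c : ℂ) : Fin d → ℂ :=
  fun k => if k = i then 1 else if k = j then c else 0

private lemma vv_dens (i j : Fin d) (hij : i ≠ j) (c : ℂ)
    (hc : c * (starRingEnd ℂ) c = 1) :
    (((1/2 : ℝ) : ℂ) • vecMulVec (vv i j c) (star (vv i j c))) ∈ densSet d := by
  refine ⟨psd_real_smul (outer_psd _) (by norm_num), ?_⟩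
  rw [trace_smul, trace_outer]
  have hpt : ∀ k, vv i j c k * (starRingEnd ℂ) (vv i j c k) =
      (if k = i then 1 else 0) + (if k = j then 1 else 0) := by
    intro k
    unfold vv
    by_cases h1 : k = i <;> by_cases h2 : k = j <;> simp_all [hc]
  simp only [hpt]
  rw [Finset.sum_add_distrib]
  simp [Finset.sum_ite_eq']
  norm_num

private lemma stdBasis_diag_dens (k : Fin d) :
    Matrix.single k k (1 : ℂ) ∈ densSet d := by
  have h : Matrix.single k k (1 : ℂ) =
      vecMulVec (Pi.single k 1) (star (Pi.single k 1)) := by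
    ext a b
    rcases eq_or_ne k a with rfl | h1
    · rcases eq_or_ne k b with rfl | h2
      · simp [Matrix.single, vecMulVec_apply]
      · simp [Matrix.single, vecMulVec_apply, Pi.single_apply, h2, Ne.symm h2]
    · simp [Matrix.single, vecMulVec_apply, Pi.single_apply, h1, Ne.symm h1]
  refine ⟨h ▸ outer_psd _, ?_⟩
  rw [h, trace_outer]
  simp [Pi.single_apply, apply_ite]

private lemma stdBasis_mem_span (i j : Fin d) :
    Matrix.single i j (1 : ℂ) ∈ Submodule.span ℂ (densSet d) := by
  by_cases hij : i = j
  · subst hij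
    exact Submodule.subset_span (stdBasis_diag_dens i)
  · have hρ1 := vv_dens i j hij 1 (by simp)
    have hρ2 := vv_dens i j hij Complex.I (by simp [Complex.conj_I, Complex.I_mul_I])
    have hkey : Matrix.single i j (1 : ℂ) =
        (((1/2 : ℝ) : ℂ) • vecMulVec (vv i j 1) (star (vv i j 1)))
          + Complex.I • (((1/2 : ℝ) : ℂ) • vecMulVec (vv i j Complex.I) (star (vv i j Complex.I)))
          - ((1 + Complex.I)/2) • Matrix.single i i (1:ℂ)
          - ((1 + Complex.I)/2) • Matrix.single j j (1:ℂ) := by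
      ext a b
      simp only [vv, Matrix.sub_apply, Matrix.add_apply, Matrix.smul_apply,
        vecMulVec_apply, Pi.star_apply, Matrix.single, of_apply, smul_eq_mul]
      by_cases ha : a = i <;> by_cases ha2 : a = j <;> by_cases hb : b = i <;>
        by_cases hb2 : b = j <;>
        (try (exfalso; apply hij; omega)) <;>
        simp_all [eq_comm, Complex.conj_I] <;>
        norm_num [Complex.I_mul_I] <;> ring_nf <;> norm_num [Complex.I_sq]
    rw [hkey]
    refine Submodule.sub_mem _ (Submodule.sub_mem _ ?_ ?_) ?_
    · exact Submodule.add_mem _ (Submodule.subset_span hρ1)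
        (Submodule.smul_mem _ _ (Submodule.subset_span hρ2))
    · exact Submodule.smul_mem _ _ (Submodule.subset_span (stdBasis_diag_dens i))
    · exact Submodule.smul_mem _ _ (Submodule.subset_span (stdBasis_diag_dens j))

private lemma span_densSet : Submodule.span ℂ (densSet d) = ⊤ := by
  rw [Submodule.eq_top_iff']
  intro A
  rw [matrix_eq_sum_single A]
  refine Submodule.sum_mem _ fun i _ => Submodule.sum_mem _ fun j _ => ?_
  have : Matrix.single i j (A i j) = A i j • Matrix.single i j (1 : ℂ) := by
    rw [smul_single, smul_eq_mul, mul_one]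
  rw [this]
  exact Submodule.smul_mem _ _ (stdBasis_mem_span i j)

/-- Twirling as a linear map. -/
private noncomputable def twirlLM {G : Type*} [Fintype G]
    (U : G → Matrix (Fin d) (Fin d) ℂ) :
    Matrix (Fin d) (Fin d) ℂ →ₗ[ℂ] Matrix (Fin d) (Fin d) ℂ where
  toFun := twirl U
  map_add' X Y := by
    simp [twirl, mul_add, add_mul, Finset.sum_add_distrib, smul_add]
  map_smul' c X := by
    simp [twirl, mul_smul_comm, smul_mul_assoc, ← Finset.smul_sum, smul_comm c]

private lemma twirlLM_apply {G : Type*} [Fintype G]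
    (U : G → Matrix (Fin d) (Fin d) ℂ) (M : Matrix (Fin d) (Fin d) ℂ) :
    twirlLM U M = twirl U M := rfl

end AuxProof

set_option maxHeartbeats 1000000 in
/-- Converse direction of the Lemma of Section II.C: if all twirled density
matrices commute, then the commutant of the representation is commutative. -/
theorem commutant_comm_of_twirl_comm {G : Type*} [Group G] [Fintype G] {d : ℕ}
    (U : G → Matrix (Fin d) (Fin d) ℂ)
    (hU : ∀ g, U g ∈ Matrix.unitaryGroup (Fin d) ℂ)
    (hU1 : U 1 = 1) (hUmul : ∀ g g', U (g * g') = U g * U g')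
    (htwirl : ∀ ρ σ : Matrix (Fin d) (Fin d) ℂ,
      ρ.PosSemidef → ρ.trace = 1 → σ.PosSemidef → σ.trace = 1 →
        twirl U ρ * twirl U σ = twirl U σ * twirl U ρ)
    (X Y : Matrix (Fin d) (Fin d) ℂ)
    (hX : ∀ g, U g * X = X * U g) (hY : ∀ g, U g * Y = Y * U g) :
    X * Y = Y * X := by
    classical
  have hcard : (Fintype.card G : ℂ) ≠ 0 := Nat.cast_ne_zero.2 Fintype.card_ne_zero
  have hfix : ∀ Z : Matrix (Fin d) (Fin d) ℂ,
      (∀ g, U g * Z = Z * U g) → twirl U Z = Z := by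
    intro Z hZ
    have hone : ∀ g : G, U g * Z * (U g)ᴴ = Z := by
      intro g
      rw [hZ g, mul_assoc, ← Matrix.star_eq_conjTranspose,
        (Matrix.mem_unitaryGroup_iff.mp (hU g)), mul_one]
    unfold twirl
    simp only [hone, Finset.sum_const, Finset.card_univ]
    rw [← Nat.cast_smul_eq_nsmul ℂ, smul_smul, inv_mul_cancel₀ hcard, one_smul]
  have stage1 : ∀ ρ ∈ densSet d, ∀ N : Matrix (Fin d) (Fin d) ℂ,
      twirl U N * twirl U ρ = twirl U ρ * twirl U N := by
    intro ρ hρ N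
    have heq : (LinearMap.mulRight ℂ (twirl U ρ)).comp (twirlLM U) =
        (LinearMap.mulLeft ℂ (twirl U ρ)).comp (twirlLM U) := by
      refine LinearMap.ext_on (span_densSet (d := d)) ?_
      intro σ hσ
      simpa only [LinearMap.coe_comp, Function.comp_apply, LinearMap.mulRight_apply,
        LinearMap.mulLeft_apply, twirlLM_apply] using htwirl σ ρ hσ.1 hσ.2 hρ.1 hρ.2
    simpa only [LinearMap.coe_comp, Function.comp_apply, LinearMap.mulRight_apply,
      LinearMap.mulLeft_apply, twirlLM_apply] using LinearMap.congr_fun heq N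
  have key : ∀ M N : Matrix (Fin d) (Fin d) ℂ,
      twirl U M * twirl U N = twirl U N * twirl U M := by
    intro M N
    have heq : (LinearMap.mulLeft ℂ (twirl U N)).comp (twirlLM U) =
        (LinearMap.mulRight ℂ (twirl U N)).comp (twirlLM U) := by
      refine LinearMap.ext_on (span_densSet (d := d)) ?_
      intro ρ hρ
      simpa only [LinearMap.coe_comp, Function.comp_apply, LinearMap.mulRight_apply,
        LinearMap.mulLeft_apply, twirlLM_apply] using stage1 ρ hρ N
    simpa only [LinearMap.coe_comp, Function.comp_apply, LinearMap.mulRight_apply,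
      LinearMap.mulLeft_apply, twirlLM_apply] using (LinearMap.congr_fun heq M).symm
  calc X * Y = twirl U X * twirl U Y := by rw [hfix X hX, hfix Y hY]
    _ = twirl U Y * twirl U X := key X Y
    _ = Y * X := by rw [hfix X hX, hfix Y hY]
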